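/- Let a1, d be positive integers, n > a1 + d, and let G = C_n^+(a1, a1+d) be the directed circulant graph on Z/nZ with outgoing arcs a1 and a1+d at every vertex. For every vertex v, every length l > 0, and every positive integer m, the number of primitive circuits on G with origin vertex v, length l, and walk sum mn equals Σ_{ω | gcd(m,l)} μ(ω) · C(l/ω, (mn − a1·l)/(ω·d)), where μ is the Möbius function and C(a,b) denotes the binomial coefficient, interpreted as 0 when b is not a nonnegative integer or b > a. -/

import Mathlib

/-!
Directed circulant graphs `C_n^+(a1,a2)` on the vertex set `ZMod n`:
circuits, periodic orbits, and pseudo orbits.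

Each vertex `v` has exactly two outgoing bonds `(v, v + a1)` and `(v, v + a2)`
(taken mod `n`), where `0 < a1 < a2 < n`.  A bond is recorded by its origin
vertex together with its arc (`a1` or `a2`).
-/

/-- The list of bonds (origin vertex, arc) of the walk starting at `v`
following the given list of arcs, on the circulant graph with vertex set `ZMod n`. -/
def bondsFrom (n : ℕ) : ZMod n → List ℕ → List (ZMod n × ℕ)
  | _, [] => []
  | v, a :: as => (v, a) :: bondsFrom n (v + (a : ZMod n)) as

/-- A circuit on the directed circulant graph `C_n^+(a1,a2)`: a starting vertex
together with a nonempty list of arcs, each equal to `a1` or `a2`, whose sum is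
`0` modulo `n` (so that the walk returns to its starting vertex). -/
structure Circuit (n a1 a2 : ℕ) where
  start : ZMod n
  arcs : List ℕ
  arcs_ne : arcs ≠ []
  arcs_mem : ∀ a ∈ arcs, a = a1 ∨ a = a2
  closed : ((arcs.sum : ℕ) : ZMod n) = 0

namespace Circuit

variable {n a1 a2 : ℕ}

/-- The length of a circuit: its number of bonds. -/
def len (c : Circuit n a1 a2) : ℕ := c.arcs.length

/-- The walk sum of a circuit: the sum of the arcs of its bonds. -/
def walkSum (c : Circuit n a1 a2) : ℕ := c.arcs.sum

/-- The list of bonds of a circuit, in order. -/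
def bonds (c : Circuit n a1 a2) : List (ZMod n × ℕ) := bondsFrom n c.start c.arcs

/-- The number of times a circuit passes the vertex `v`: the number of bonds
`(v₀, a)` of the circuit such that the residue of `v - v₀` in `{0, ..., n-1}`
is strictly smaller than the arc `a` (equivalently, than the residue of the
difference of the terminal and origin vertices of the bond). -/
def passCount (c : Circuit n a1 a2) (v : ZMod n) : ℕ :=
  c.bonds.countP fun b => decide ((v - b.1).val < b.2)

/-- The cyclic rotation of a circuit by `k` steps. -/
def rotate (c : Circuit n a1 a2) (k : ℕ) : Circuit n a1 a2 where
  start := c.start + (((c.arcs.take k).sum : ℕ) : ZMod n)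
  arcs := c.arcs.rotate k
  arcs_ne := fun h => c.arcs_ne (by rwa [List.rotate_eq_nil_iff] at h)
  arcs_mem := fun a ha => c.arcs_mem a (List.mem_rotate.mp ha)
  closed := by
    rw [show (c.arcs.rotate k).sum = c.arcs.sum from (c.arcs.rotate_perm k).sum_eq]
    exact c.closed

/-- A circuit is primitive if it does not consist of a strictly shorter circuit
repeated two or more times. -/
def IsPrimitive (c : Circuit n a1 a2) : Prop :=
  ¬ ∃ (w : List ℕ) (r : ℕ), 2 ≤ r ∧ ((w.sum : ℕ) : ZMod n) = 0 ∧
      c.arcs = (List.replicate r w).flatten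

end Circuit

/-- Two circuits are related if the second is a cyclic rotation of the first. -/
def RotRel {n a1 a2 : ℕ} (c c' : Circuit n a1 a2) : Prop := ∃ k, c.rotate k = c'

/-- A periodic orbit: an equivalence class of circuits under cyclic rotation. -/
def PeriodicOrbit (n a1 a2 : ℕ) : Type := Quot (@RotRel n a1 a2)

namespace PeriodicOrbit

variable {n a1 a2 : ℕ}

/-- The periodic orbit of a circuit. -/
def mk (c : Circuit n a1 a2) : PeriodicOrbit n a1 a2 := Quot.mk _ c

/-- The length of a periodic orbit: the length of any representative circuit. -/
def len : PeriodicOrbit n a1 a2 → ℕ :=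
  Quot.lift Circuit.len (by
    rintro c c' ⟨k, rfl⟩
    simp [Circuit.len, Circuit.rotate])

/-- The walk sum of a periodic orbit: the walk sum of any representative circuit. -/
def walkSum : PeriodicOrbit n a1 a2 → ℕ :=
  Quot.lift Circuit.walkSum (by
    rintro c c' ⟨k, rfl⟩
    exact ((c.arcs.rotate_perm k).sum_eq).symm)

/-- A periodic orbit is primitive if it is the class of a primitive circuit. -/
def IsPrimitive (γ : PeriodicOrbit n a1 a2) : Prop :=
  ∃ c : Circuit n a1 a2, mk c = γ ∧ c.IsPrimitive

/-- The multiset of bonds of a periodic orbit (computed from a representative;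
this is independent of the representative since rotation permutes the bonds). -/
noncomputable def bonds (γ : PeriodicOrbit n a1 a2) : Multiset (ZMod n × ℕ) :=
  ((Quot.exists_rep γ).choose.bonds : Multiset (ZMod n × ℕ))

/-- The number of times a periodic orbit passes a vertex (computed from a
representative; this is independent of the representative). -/
noncomputable def passCount (γ : PeriodicOrbit n a1 a2) (v : ZMod n) : ℕ :=
  (Quot.exists_rep γ).choose.passCount v

end PeriodicOrbit

/-- A pseudo orbit: a finite collection of periodic orbits. -/
abbrev PseudoOrbit (n a1 a2 : ℕ) := Multiset (PeriodicOrbit n a1 a2)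

namespace PseudoOrbit

variable {n a1 a2 : ℕ}

/-- The length of a pseudo orbit: the sum of the lengths of its members. -/
def len (ps : PseudoOrbit n a1 a2) : ℕ := (ps.map PeriodicOrbit.len).sum

/-- The walk sum of a pseudo orbit: the sum of the walk sums of its members. -/
def walkSum (ps : PseudoOrbit n a1 a2) : ℕ := (ps.map PeriodicOrbit.walkSum).sum

/-- A pseudo orbit is primitive if its members are primitive and pairwise distinct. -/
def IsPrimitive (ps : PseudoOrbit n a1 a2) : Prop :=
  (∀ γ ∈ ps, PeriodicOrbit.IsPrimitive γ) ∧ ps.Nodup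

/-- The multiset of bonds of a pseudo orbit, counted with multiplicity over all
member periodic orbits. -/
noncomputable def bonds (ps : PseudoOrbit n a1 a2) : Multiset (ZMod n × ℕ) :=
  (ps.map PeriodicOrbit.bonds).sum

/-- The multiset of origin vertices of the bonds of a pseudo orbit, with multiplicity. -/
noncomputable def origins (ps : PseudoOrbit n a1 a2) : Multiset (ZMod n) :=
  ps.bonds.map Prod.fst

/-- A pseudo orbit has no self-intersection if no vertex occurs more than once
among the origin vertices of its bonds. -/
def NoSelfIntersection (ps : PseudoOrbit n a1 a2) : Prop :=
  ∀ v : ZMod n, ps.origins.count v ≤ 1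

/-- The number of vertices occurring exactly twice among the origin vertices of
the bonds of a pseudo orbit. -/
noncomputable def twoEncounterCount (ps : PseudoOrbit n a1 a2) : ℕ :=
  (ps.origins.toFinset.filter fun v => ps.origins.count v = 2).card

/-- The pseudo orbit has exactly `N` self-intersections, each a 2-encounter of
length zero, and no other self-intersection: exactly `N` vertices occur exactly
twice among the origin vertices of its bonds, no vertex occurs more than twice,
and no bond occurs more than once. -/
def OnlyTwoEncounters (ps : PseudoOrbit n a1 a2) (N : ℕ) : Prop :=
  ps.bonds.Nodup ∧ (∀ v : ZMod n, ps.origins.count v ≤ 2) ∧ ps.twoEncounterCount = N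

/-- The number of times a pseudo orbit passes a vertex: the total over its members. -/
noncomputable def passCount (ps : PseudoOrbit n a1 a2) (v : ZMod n) : ℕ :=
  (ps.map fun γ => γ.passCount v).sum

end PseudoOrbit

namespace CircAux
open List

lemma length_flatten_rep (k : ℕ) (u : List ℕ) :
    ((List.replicate k u).flatten).length = k * u.length := by
  induction k with
  | zero => simp
  | succ k ih => simp [List.replicate_succ, ih, Nat.succ_mul, Nat.add_comm]

lemma sum_flatten_rep (k : ℕ) (u : List ℕ) :
    ((List.replicate k u).flatten).sum = k * u.sum := by
  induction k with
  | zero => simp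
  | succ k ih => simp [List.replicate_succ, ih, Nat.succ_mul, Nat.add_comm]

lemma rep_comm (k : ℕ) (u : List ℕ) :
    u ++ (List.replicate k u).flatten = (List.replicate k u).flatten ++ u := by
  induction k with
  | zero => simp
  | succ k ih =>
    simp only [List.replicate_succ, List.flatten_cons]
    rw [List.append_assoc, ih, ← List.append_assoc]

lemma flatten_rep_flatten_rep (a b : ℕ) (u : List ℕ) :
    (List.replicate a ((List.replicate b u).flatten)).flatten
      = (List.replicate (a * b) u).flatten := by
  induction a with
  | zero => simp
  | succ a ih =>
    rw [List.replicate_succ, List.flatten_cons, ih, Nat.succ_mul, Nat.add_comm,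
      List.replicate_add, List.flatten_append]

lemma rotate_flatten_rep (k : ℕ) (u : List ℕ) :
    ((List.replicate k u).flatten).rotate u.length = (List.replicate k u).flatten := by
  cases k with
  | zero => simp
  | succ k =>
    rw [List.replicate_succ, List.flatten_cons]
    rw [List.rotate_eq_drop_append_take (by simp [length_flatten_rep k u, Nat.le_add_right])]
    · rw [List.drop_left, List.take_left, ← rep_comm]

lemma take_flatten_rep (j k : ℕ) (u : List ℕ) (h : j ≤ k) :
    (List.replicate k u).flatten.take (j * u.length) = (List.replicate j u).flatten := by
  induction j generalizing k with
  | zero => simp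
  | succ j ih =>
    obtain ⟨k', rfl⟩ := Nat.exists_eq_add_of_le h
    rw [List.replicate_add, List.flatten_append, ← length_flatten_rep (j+1) u,
      List.take_left]

lemma rotate_mul (w : List ℕ) (t q : ℕ) (h : w.rotate t = w) : w.rotate (q * t) = w := by
  induction q with
  | zero => simp
  | succ q ih => rw [Nat.succ_mul, ← List.rotate_rotate, ih, h]

/-- existence of a positive rotation period -/
lemma exists_per (w : List ℕ) : ∃ t, 0 < t ∧ w.rotate t = w := by
  rcases eq_or_ne w [] with rfl | h
  · exact ⟨1, Nat.one_pos, rfl⟩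
  · exact ⟨w.length, List.length_pos_iff.mpr h, List.rotate_length w⟩

/-- minimal positive rotation period -/
noncomputable def per (w : List ℕ) : ℕ := Nat.find (exists_per w)

lemma per_pos (w : List ℕ) : 0 < per w := (Nat.find_spec (exists_per w)).1

lemma rotate_per (w : List ℕ) : w.rotate (per w) = w := (Nat.find_spec (exists_per w)).2

lemma per_dvd (w : List ℕ) (t : ℕ) (h : w.rotate t = w) : per w ∣ t := by
  have h1 : w.rotate (per w * (t / per w)) = w := by
    rw [Nat.mul_comm]; exact rotate_mul w (per w) (t / per w) (rotate_per w)
  have hmod : w.rotate (t % per w) = w := by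
    have h2 := List.rotate_rotate w (per w * (t / per w)) (t % per w)
    rw [h1, Nat.div_add_mod] at h2
    rw [h2, h]
  rcases Nat.eq_zero_or_pos (t % per w) with h0 | h0
  · exact Nat.dvd_of_mod_eq_zero h0
  · exfalso
    have := Nat.find_min (exists_per w) (Nat.mod_lt t (per_pos w)) 
    exact this ⟨h0, hmod⟩

lemma per_dvd_length (w : List ℕ) (h : w ≠ []) : per w ∣ w.length :=
  per_dvd w _ (List.rotate_length w)

/-- the key periodicity decomposition -/
lemma eq_flatten_of_rotate (t : ℕ) (ht : 0 < t) :
    ∀ k (w : List ℕ), w.length = k * t → w.rotate t = w →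
      w = (List.replicate k (w.take t)).flatten := by
  intro k
  induction k with
  | zero =>
    intro w hw _
    have : w = [] := List.length_eq_zero_iff.mp (by simpa using hw)
    simp [this]
  | succ k ih =>
    intro w hw hrot
    have htle : t ≤ w.length := by rw [hw, Nat.succ_mul]; exact Nat.le_add_left _ _
    set u := w.take t with hu
    set x := w.drop t with hx
    have hul : u.length = t := by rw [hu, List.length_take]; omega
    have hxl : x.length = k * t := by rw [hx, List.length_drop, hw, Nat.succ_mul]; omega
    have hw2 : w = u ++ x := (List.take_append_drop t w).symm
    have hcomm : x ++ u = u ++ x := by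
      calc x ++ u = w.rotate t := (List.rotate_eq_drop_append_take htle).symm
      _ = w := hrot
      _ = u ++ x := hw2
    rcases Nat.eq_zero_or_pos k with rfl | hk
    · have : x = [] := List.length_eq_zero_iff.mp (by omega)
      rw [List.replicate_succ, List.flatten_cons]
      simp [this] at hw2 ⊢
      exact hw2
    · have htx : t ≤ x.length := by rw [hxl]; exact Nat.le_mul_of_pos_left t hk
      have hTL : List.take t (u ++ x) = u := by rw [← hul]; exact List.take_left (l₁ := u) (l₂ := x)
      have hDL : List.drop t (u ++ x) = x := by rw [← hul]; exact List.drop_left (l₁ := u) (l₂ := x)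
      have htakex : x.take t = u := by
        have := congrArg (List.take t) hcomm
        rwa [List.take_append_of_le_length htx, hTL] at this
      have hdropx : x.drop t ++ u = x := by
        have := congrArg (List.drop t) hcomm
        rwa [List.drop_append_of_le_length htx, hDL] at this
      have hrotx : x.rotate t = x := by
        rw [List.rotate_eq_drop_append_take htx, htakex, hdropx]
      have hxr := ih x hxl hrotx
      rw [htakex] at hxr
      rw [List.replicate_succ, List.flatten_cons, hw2, ← hxr]

lemma rotate_iff_flatten (w : List ℕ) (t : ℕ) (ht : 0 < t) (hdvd : t ∣ w.length) :
    w.rotate t = w ↔ w = (List.replicate (w.length / t) (w.take t)).flatten := by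
  constructor
  · intro h
    exact eq_flatten_of_rotate t ht (w.length / t) w (Nat.div_mul_cancel hdvd).symm h
  · intro h
    rcases Nat.eq_zero_or_pos w.length with h0 | h0
    · rw [List.length_eq_zero_iff.mp h0]; simp
    · have htle : t ≤ w.length := Nat.le_of_dvd h0 hdvd
      set u := w.take t with hu
      have hul : u.length = t := by rw [hu, List.length_take]; omega
      conv_lhs => rw [h, ← hul, rotate_flatten_rep]
      rw [hul, ← h]

lemma rotate_flatten_rep' (k t : ℕ) (z : List ℕ) (hz : z.length = t) :
    ((List.replicate k z).flatten).rotate t = (List.replicate k z).flatten := by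
  rw [← hz]; exact rotate_flatten_rep k z

lemma per_flatten_rep (k : ℕ) (hk : 0 < k) (u : List ℕ) (hu : u ≠ []) :
    per ((List.replicate k u).flatten) = per u := by
  set w := (List.replicate k u).flatten with hw
  have hulen : 0 < u.length := List.length_pos_iff.mpr hu
  have hwlen : w.length = k * u.length := length_flatten_rep k u
  have hwpos : 0 < w.length := by rw [hwlen]; positivity
  have hwne : w ≠ [] := by intro h; rw [h] at hwpos; simp at hwpos
  have hpu_dvd : per u ∣ u.length := per_dvd_length u hu
  have hpu_le : per u ≤ u.length := Nat.le_of_dvd hulen hpu_dvd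
  -- (a) per w ∣ per u
  have htake_len : (u.take (per u)).length = per u := by rw [List.length_take]; omega
  have hdec : u = (List.replicate (u.length / per u) (u.take (per u))).flatten :=
    (rotate_iff_flatten u (per u) (per_pos u) hpu_dvd).mp (rotate_per u)
  have hwdec : w = (List.replicate (k * (u.length / per u)) (u.take (per u))).flatten := by
    rw [hw]
    conv_lhs => rw [hdec]
    exact flatten_rep_flatten_rep _ _ _
  have hrotw : w.rotate (per u) = w := by
    conv_lhs => rw [hwdec]
    rw [rotate_flatten_rep' _ _ _ htake_len, ← hwdec]
  have ha : per w ∣ per u := per_dvd w (per u) hrotw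
  -- (b) per u ∣ per w
  have hgu : per w ∣ u.length := ha.trans hpu_dvd
  have hgw : per w ≤ w.length := Nat.le_of_dvd hwpos (per_dvd_length w hwne)
  have htgl : (w.take (per w)).length = per w := by rw [List.length_take]; omega
  have hwdec2 : w = (List.replicate (w.length / per w) (w.take (per w))).flatten :=
    (rotate_iff_flatten w (per w) (per_pos w) (per_dvd_length w hwne)).mp (rotate_per w)
  have hutake : u = w.take u.length := by
    cases k with
    | zero => omega
    | succ k' =>
      rw [hw, List.replicate_succ, List.flatten_cons]
      exact (List.take_left (l₁ := u)).symm
  have hj : u.length / per w ≤ w.length / per w :=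
    Nat.div_le_div_right (by rw [hwlen]; exact Nat.le_mul_of_pos_left _ hk)
  have hudec : u = (List.replicate (u.length / per w) (w.take (per w))).flatten := by
    have h1 := take_flatten_rep (u.length / per w) (w.length / per w) (w.take (per w)) hj
    rw [← hwdec2, htgl, Nat.div_mul_cancel hgu] at h1
    exact hutake.trans h1
  have hrotu : u.rotate (per w) = u := by
    conv_lhs => rw [hudec]
    rw [rotate_flatten_rep' _ _ _ htgl, ← hudec]
  exact Nat.dvd_antisymm ha (per_dvd u (per w) hrotu)

lemma sum_eq_filter (a1 d l : ℕ) (w : List ℕ) (hlen : w.length = l)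
    (hmem : ∀ a ∈ w, a = a1 ∨ a = a1 + d) :
    w.sum = a1 * l + d * (Finset.univ.filter
      (fun i : Fin l => w[i.1]'(by omega) = a1 + d)).card := by
  subst hlen
  conv_lhs => rw [← List.ofFn_getElem (xs := w)]
  rw [List.sum_ofFn]
  have h1 : ∀ i : Fin w.length, w[i.1] = a1 + (if w[i.1] = a1 + d then d else 0) := by
    intro i
    rcases hmem w[i.1] (List.getElem_mem i.2) with h | h <;> simp [h]
  rw [Finset.sum_congr rfl (fun i _ => h1 i), Finset.sum_add_distrib]
  congr 1
  · simp [Finset.sum_const, Nat.mul_comm]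
  · rw [← Finset.sum_filter, Finset.sum_const, smul_eq_mul, Nat.mul_comm]

lemma mem_ofFn_ite (a1 d l : ℕ) (s : Finset (Fin l)) :
    ∀ a ∈ List.ofFn (fun i : Fin l => if i ∈ s then a1 + d else a1), a = a1 ∨ a = a1 + d := by
  intro a ha
  rw [List.mem_ofFn] at ha
  obtain ⟨i, hi⟩ := ha
  by_cases h : i ∈ s <;> simp [h] at hi <;> omega

lemma sum_ofFn_ite (a1 d l : ℕ) (s : Finset (Fin l)) :
    (List.ofFn (fun i : Fin l => if i ∈ s then a1 + d else a1)).sum = a1 * l + d * s.card := by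
  rw [List.sum_ofFn]
  have h1 : ∀ i : Fin l, (if i ∈ s then a1 + d else a1) = a1 + (if i ∈ s then d else 0) := by
    intro i; by_cases h : i ∈ s <;> simp [h]
  rw [Finset.sum_congr rfl (fun i _ => h1 i), Finset.sum_add_distrib]
  congr 1
  · simp [Nat.mul_comm]
  · rw [← Finset.sum_filter, Finset.sum_const, smul_eq_mul, Nat.mul_comm]
    congr 1
    simp [Finset.filter_mem_eq_inter]

/-- The class equivalence: circuits with given start, length and walk sum
correspond to subsets of positions of the larger arc. -/
noncomputable def classEquiv (n a1 d : ℕ) (hd : 0 < d) (v : ZMod n) (l S : ℕ) (hl : 0 < l)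
    (hS : ((S : ℕ) : ZMod n) = 0) :
    {c : Circuit n a1 (a1+d) // c.start = v ∧ c.len = l ∧ c.walkSum = S} ≃
      {s : Finset (Fin l) // a1 * l + d * s.card = S} where
  toFun c := ⟨Finset.univ.filter
      (fun i : Fin l => c.1.arcs[i.1]'(by rw [show c.1.arcs.length = l from c.2.2.1]; exact i.2)
        = a1 + d), by
    rw [← sum_eq_filter a1 d l c.1.arcs c.2.2.1 c.1.arcs_mem]
    exact c.2.2.2⟩
  invFun s := ⟨⟨v, List.ofFn (fun i : Fin l => if i ∈ s.1 then a1 + d else a1),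
      by intro h; have := congrArg List.length h; simp at this; omega,
      mem_ofFn_ite a1 d l s.1,
      by rw [sum_ofFn_ite a1 d l s.1, s.2]; exact hS⟩,
    rfl, by simp [Circuit.len], by rw [Circuit.walkSum]; exact (sum_ofFn_ite a1 d l s.1).trans s.2⟩
  left_inv := by
    rintro ⟨⟨st, arcs, h1, h2, h3⟩, hv, hlen, hsum⟩
    simp only [Circuit.len] at hlen
    apply Subtype.ext
    simp only at hv ⊢
    subst hv
    simp only [Circuit.mk.injEq, true_and]
    apply List.ext_getElem (by simp [hlen])
    intro i hi1 hi2
    simp only [List.getElem_ofFn, Finset.mem_filter, Finset.mem_univ, true_and]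
    rcases h2 arcs[i] (List.getElem_mem hi2) with h | h
    · rw [if_neg]; exact h.symm
      rw [h]; omega
    · rw [if_pos]; exact h.symm
      exact h
  right_inv := by
    rintro ⟨s, hs⟩
    apply Subtype.ext
    simp only
    ext i
    simp only [Finset.mem_filter, Finset.mem_univ, true_and, List.getElem_ofFn]
    by_cases h : i ∈ s <;> simp [h]
    omega

lemma card_class (n a1 d : ℕ) (hd : 0 < d) (v : ZMod n) (l S : ℕ) (hl : 0 < l)
    (hS : ((S : ℕ) : ZMod n) = 0) :
    Nat.card {c : Circuit n a1 (a1+d) // c.start = v ∧ c.len = l ∧ c.walkSum = S} =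
      if a1 * l ≤ S ∧ d ∣ S - a1 * l then l.choose ((S - a1 * l) / d) else 0 := by
  rw [Nat.card_congr (classEquiv n a1 d hd v l S hl hS)]
  by_cases h : a1 * l ≤ S ∧ d ∣ S - a1 * l
  · rw [if_pos h]
    set q := (S - a1 * l) / d with hq
    have hdq : d * q = S - a1 * l := Nat.mul_div_cancel' h.2
    have hcond : ∀ c : ℕ, (a1 * l + d * c = S) ↔ c = q := by
      intro c
      constructor
      · intro hc
        have : d * c = d * q := by omega
        exact Nat.eq_of_mul_eq_mul_left hd this
      · rintro rfl; omega
    have e2 : {s : Finset (Fin l) // a1 * l + d * s.card = S} ≃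
        {s : Finset (Fin l) // s.card = q} :=
      Equiv.subtypeEquivRight (fun s => hcond s.card)
    rw [Nat.card_congr e2, Nat.card_eq_fintype_card, Fintype.card_finset_len, Fintype.card_fin]
  · rw [if_neg h]
    have : IsEmpty {s : Finset (Fin l) // a1 * l + d * s.card = S} := by
      constructor
      rintro ⟨s, hs⟩
      exact h ⟨by omega, ⟨s.card, by omega⟩⟩
    exact Nat.card_of_isEmpty

lemma Circuit.ext' {n a1 a2 : ℕ} {c c' : Circuit n a1 a2}
    (h1 : c.start = c'.start) (h2 : c.arcs = c'.arcs) : c = c' := by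
  cases c; cases c'
  simp only at h1 h2
  subst h1; subst h2
  rfl

lemma flatten_rep_nil (r : ℕ) : (List.replicate r ([] : List ℕ)).flatten = [] := by
  induction r with
  | zero => rfl
  | succ r ih => simp [List.replicate_succ, ih]

/-- Primitivity criterion: a circuit with walk sum `μ * n` is primitive iff the
maximal word-exponent of its arc list is coprime to `μ`. -/
lemma isPrimitive_iff {n a1 a2 : ℕ} (hn : 0 < n) (c : Circuit n a1 a2) (μ : ℕ) (hμ : 0 < μ)
    (hsum : c.walkSum = μ * n) :
    c.IsPrimitive ↔ Nat.gcd (c.len / per c.arcs) μ = 1 := by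
  haveI : NeZero n := ⟨hn.ne'⟩
  set w := c.arcs with hw
  have hwne : w ≠ [] := c.arcs_ne
  have hlpos : 0 < w.length := List.length_pos_iff.mpr hwne
  set g := per w with hg
  have hgpos : 0 < g := per_pos w
  have hgdvd : g ∣ w.length := per_dvd_length w hwne
  have hlen : c.len = w.length := rfl
  set e := w.length / g with he
  have hge : g * e = w.length := Nat.mul_div_cancel' hgdvd
  have hedvd : e ∣ w.length := ⟨g, by rw [← hge]; ring⟩
  have hepos : 0 < e := by
    rcases Nat.eq_zero_or_pos e with h0 | h0
    · rw [h0, Nat.mul_zero] at hge; omega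
    · exact h0
  rw [hlen]
  constructor
  · -- primitive → gcd = 1
    intro hprim
    by_contra hne
    set r := Nat.gcd e μ with hr
    have hrpos : 0 < r := Nat.gcd_pos_of_pos_right e hμ
    have hr2 : 2 ≤ r := by omega
    have hre : r ∣ e := Nat.gcd_dvd_left e μ
    have hrμ : r ∣ μ := Nat.gcd_dvd_right e μ
    have hrl : r ∣ w.length := hre.trans hedvd
    have htpos : 0 < w.length / r := Nat.div_pos (Nat.le_of_dvd hlpos hrl) hrpos
    have htdvd : w.length / r ∣ w.length := Nat.div_dvd_of_dvd hrl
    obtain ⟨e', he'⟩ := hre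
    have h1 : w.length = (e' * g) * r := by rw [← hge, he']; ring
    have hlr : w.length / r = (e / r) * g := by
      rw [h1, Nat.mul_div_cancel _ hrpos, he', Nat.mul_div_cancel_left _ hrpos]
    have hrot : w.rotate (w.length / r) = w := by
      rw [hlr]
      exact rotate_mul w g (e / r) (rotate_per w)
    have hdec := (rotate_iff_flatten w (w.length / r) htpos htdvd).mp hrot
    rw [Nat.div_div_self hrl (by omega)] at hdec
    apply hprim
    refine ⟨w.take (w.length / r), r, hr2, ?_, hdec⟩
    -- sum of the short word is (μ/r) * n
    have hsum2 : w.sum = r * (w.take (w.length / r)).sum := by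
      conv_lhs => rw [hdec]
      exact sum_flatten_rep _ _
    have hws : c.walkSum = w.sum := rfl
    have hμr : μ = r * (μ / r) := (Nat.mul_div_cancel' hrμ).symm
    have : r * (w.take (w.length / r)).sum = r * ((μ / r) * n) := by
      rw [← hsum2, ← hws, hsum]
      conv_lhs => rw [hμr]
      ring
    have hts : (w.take (w.length / r)).sum = (μ / r) * n :=
      Nat.eq_of_mul_eq_mul_left hrpos this
    rw [hts]
    push_cast
    simp [ZMod.natCast_self]
  · -- gcd = 1 → primitive
    intro hcop
    rintro ⟨w0, r, hr2, hw0sum, hflat⟩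
    rw [← hw] at hflat
    have hw0ne : w0 ≠ [] := by
      rintro rfl
      rw [flatten_rep_nil] at hflat
      exact hwne hflat
    have hw0pos : 0 < w0.length := List.length_pos_iff.mpr hw0ne
    have hlw0 : w.length = r * w0.length := by rw [hflat, length_flatten_rep]
    have hrotw0 : w.rotate w0.length = w := by
      conv_lhs => rw [hflat]
      rw [rotate_flatten_rep, ← hflat]
    have hgw0 : g ∣ w0.length := per_dvd w w0.length hrotw0
    obtain ⟨s, hs⟩ := hgw0
    have hre : r ∣ e := by
      have h3 : g * e = g * (r * s) := by rw [hge, hlw0, hs]; ring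
      exact ⟨s, Nat.eq_of_mul_eq_mul_left hgpos h3⟩
    -- n ∣ w0.sum
    have hndvd : n ∣ w0.sum := (ZMod.natCast_eq_zero_iff _ n).mp hw0sum
    obtain ⟨t, ht⟩ := hndvd
    have hsumw : w.sum = r * w0.sum := by
      conv_lhs => rw [hflat]; exact sum_flatten_rep _ _
    have hμrt : μ = r * t := by
      have h1 : μ * n = r * (n * t) := by
        rw [← ht, ← hsumw]
        have : c.walkSum = w.sum := rfl
        omega
      have h2 : n * μ = n * (r * t) := by rw [Nat.mul_comm n μ, h1]; ring
      exact Nat.eq_of_mul_eq_mul_left hn h2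
    have hrμ : r ∣ μ := ⟨t, hμrt⟩
    have : r ∣ Nat.gcd e μ := Nat.dvd_gcd hre hrμ
    rw [hcop] at this
    have := Nat.le_of_dvd Nat.one_pos this
    omega

lemma take_len_flatten_rep (k : ℕ) (hk : 0 < k) (u : List ℕ) :
    ((List.replicate k u).flatten).take u.length = u := by
  cases k with
  | zero => omega
  | succ k' =>
    rw [List.replicate_succ, List.flatten_cons]
    exact List.take_left (l₁ := u)

lemma nat_card_sigma {ι : Type} [Fintype ι] (f : ι → Type) [∀ i, Finite (f i)] :
    Nat.card (Σ i, f i) = ∑ i, Nat.card (f i) := by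
  letI : ∀ i, Fintype (f i) := fun i => Fintype.ofFinite _
  simp [Nat.card_eq_fintype_card, Fintype.card_sigma]

lemma card_all_eq_sum (n a1 d : ℕ) (hd : 0 < d) (hn : 0 < n) (v : ZMod n)
    (l m : ℕ) (hl : 0 < l) (hm : 0 < m) :
    Nat.card {c : Circuit n a1 (a1+d) // c.start = v ∧ c.len = l ∧ c.walkSum = m * n} =
      ∑ ω ∈ (Nat.gcd m l).divisors,
        Nat.card {c : Circuit n a1 (a1+d) //
          c.start = v ∧ c.len = l / ω ∧ c.walkSum = (m / ω) * n ∧ c.IsPrimitive} := by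
  haveI : NeZero n := ⟨hn.ne'⟩
  have hS : (((m * n : ℕ) : ZMod n)) = 0 := by push_cast; simp
  set G := Nat.gcd m l with hG
  have hGpos : 0 < G := Nat.gcd_pos_of_pos_left l hm
  -- the fibers
  let fib : ℕ → Type := fun ω => {c : Circuit n a1 (a1+d) //
    (c.start = v ∧ c.len = l ∧ c.walkSum = m * n) ∧
      Nat.gcd (c.len / per c.arcs) m = ω}
  -- membership of the fiber index in the divisors of G
  have hmem : ∀ c : Circuit n a1 (a1+d), c.len = l →
      Nat.gcd (c.len / per c.arcs) m ∈ G.divisors := by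
    intro c hcl
    rw [Nat.mem_divisors]
    have hwne : c.arcs ≠ [] := c.arcs_ne
    have hldvd : per c.arcs ∣ c.len := per_dvd_length c.arcs hwne
    have hediv : c.len / per c.arcs ∣ c.len := Nat.div_dvd_of_dvd hldvd
    refine ⟨Nat.dvd_gcd (Nat.gcd_dvd_right _ _) ?_, by omega⟩
    exact (Nat.gcd_dvd_left _ _).trans (hcl ▸ hediv)
  -- Step 1 : sigma decomposition
  let E : {c : Circuit n a1 (a1+d) // c.start = v ∧ c.len = l ∧ c.walkSum = m * n} ≃
      Σ ω : {x // x ∈ G.divisors}, fib ω.1 :=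
    { toFun := fun c => ⟨⟨Nat.gcd (c.1.len / per c.1.arcs) m, hmem c.1 c.2.2.1⟩,
        ⟨c.1, c.2, rfl⟩⟩
      invFun := fun x => ⟨x.2.1, x.2.2.1⟩
      left_inv := fun c => rfl
      right_inv := by
        rintro ⟨⟨ω, hω⟩, c, hc, hf⟩
        obtain rfl : Nat.gcd (c.len / per c.arcs) m = ω := hf
        rfl }
  -- finiteness
  haveI hAllF : Finite {c : Circuit n a1 (a1+d) //
      c.start = v ∧ c.len = l ∧ c.walkSum = m * n} :=
    Finite.of_equiv _ (classEquiv n a1 d hd v l (m * n) hl hS).symm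
  haveI hfibF : ∀ ω : {x // x ∈ G.divisors}, Finite (fib ω.1) := by
    intro ω
    apply Finite.of_injective (fun x : fib ω.1 =>
      (⟨x.1, x.2.1⟩ : {c : Circuit n a1 (a1+d) //
        c.start = v ∧ c.len = l ∧ c.walkSum = m * n}))
    intro x y h
    simp only [Subtype.mk.injEq] at h
    exact Subtype.ext h
  rw [Nat.card_congr E, nat_card_sigma]
  rw [Finset.sum_coe_sort G.divisors (fun ω => Nat.card (fib ω))]
  apply Finset.sum_congr rfl
  intro ω hω
  -- Step 2 : each fiber is equivalent to the primitive class
  rw [Nat.mem_divisors] at hω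
  have hωm : ω ∣ m := hω.1.trans (Nat.gcd_dvd_left m l)
  have hωl : ω ∣ l := hω.1.trans (Nat.gcd_dvd_right m l)
  have hωpos : 0 < ω := Nat.pos_of_dvd_of_pos hωm hm
  have hmω : 0 < m / ω := Nat.div_pos (Nat.le_of_dvd hm hωm) hωpos
  have hlω : 0 < l / ω := Nat.div_pos (Nat.le_of_dvd hl hωl) hωpos
  have hmul : ω * (l / ω) = l := Nat.mul_div_cancel' hωl
  have hmmul : ω * (m / ω) = m := Nat.mul_div_cancel' hωm
  let Ψ : {c : Circuit n a1 (a1+d) //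
      c.start = v ∧ c.len = l / ω ∧ c.walkSum = (m / ω) * n ∧ c.IsPrimitive} → fib ω :=
    fun c => ⟨⟨v, (List.replicate ω c.1.arcs).flatten,
      by
        intro h
        have := congrArg List.length h
        rw [length_flatten_rep] at this
        have h2 : c.1.arcs.length = l / ω := c.2.2.1
        simp [h2] at this
        have := Nat.le_of_dvd hl hωl
        omega,
      by
        intro a ha
        rw [List.mem_flatten] at ha
        obtain ⟨t, ht, hat⟩ := ha
        rw [List.mem_replicate] at ht
        exact c.1.arcs_mem a (ht.2 ▸ hat),
      by
        rw [sum_flatten_rep]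
        have h2 : c.1.arcs.sum = (m / ω) * n := c.2.2.2.1
        rw [h2, ← Nat.mul_assoc, hmmul]
        exact hS⟩,
      by
        have h2 : c.1.arcs.length = l / ω := c.2.2.1
        have h3 : c.1.arcs.sum = (m / ω) * n := c.2.2.2.1
        constructor
        · refine ⟨rfl, ?_, ?_⟩
          · show ((List.replicate ω c.1.arcs).flatten).length = l
            rw [length_flatten_rep, h2, hmul]
          · show ((List.replicate ω c.1.arcs).flatten).sum = m * n
            rw [sum_flatten_rep, h3, ← Nat.mul_assoc, hmmul]
        · -- the fiber invariant
          have hune : c.1.arcs ≠ [] := c.1.arcs_ne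
          have hper : per ((List.replicate ω c.1.arcs).flatten) = per c.1.arcs :=
            per_flatten_rep ω hωpos c.1.arcs hune
          show Nat.gcd (((List.replicate ω c.1.arcs).flatten).length / _) m = ω
          rw [hper, length_flatten_rep, h2, hmul]
          have hcop : Nat.gcd (c.1.len / per c.1.arcs) (m / ω) = 1 :=
            (isPrimitive_iff hn c.1 (m / ω) hmω c.2.2.2.1).mp c.2.2.2.2
          rw [show c.1.len = l / ω from c.2.2.1] at hcop
          set p := per c.1.arcs with hpdef
          have hgdvd : p ∣ l / ω := by
            have h9 := per_dvd_length c.1.arcs hune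
            rw [h2] at h9
            exact h9
          have hgpos : 0 < p := per_pos _
          obtain ⟨e0, he0⟩ := hgdvd
          have hA : l / ω / p = e0 := by
            rw [he0]; exact Nat.mul_div_cancel_left e0 hgpos
          have hB : l = p * (ω * e0) := by
            conv_lhs => rw [← hmul, he0]
            ring
          have hC : l / p = ω * e0 := by
            rw [hB]; exact Nat.mul_div_cancel_left _ hgpos
          rw [hA] at hcop
          rw [hC, ← hmmul, Nat.gcd_mul_left, hcop, Nat.mul_one]⟩
  have hinj : Function.Injective Ψ := by
    rintro ⟨c, hc⟩ ⟨c', hc'⟩ h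
    have harc : (List.replicate ω c.arcs).flatten = (List.replicate ω c'.arcs).flatten :=
      congrArg (fun x => (x.1 : Circuit n a1 (a1+d)).arcs) h
    have harcs : c.arcs = c'.arcs := by
      have t1 : ((List.replicate ω c.arcs).flatten).take c.arcs.length = c.arcs :=
        take_len_flatten_rep ω hωpos c.arcs
      have t2 : ((List.replicate ω c'.arcs).flatten).take c'.arcs.length = c'.arcs :=
        take_len_flatten_rep ω hωpos c'.arcs
      have hlen12 : c.arcs.length = c'.arcs.length := by
        rw [show c.arcs.length = l / ω from hc.2.1, show c'.arcs.length = l / ω from hc'.2.1]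
      rw [← t1, ← t2, ← hlen12, harc]
    exact Subtype.ext (Circuit.ext' (hc.1.trans hc'.1.symm) harcs)
  have hsurj : Function.Surjective Ψ := by
    rintro ⟨C, ⟨hv, hlen, hsum⟩, hf⟩
    have hwne : C.arcs ≠ [] := C.arcs_ne
    have hg : per C.arcs ∣ C.len := per_dvd_length C.arcs hwne
    have hgpos : 0 < per C.arcs := per_pos _
    have hωe : ω ∣ C.len / per C.arcs := hf ▸ Nat.gcd_dvd_left _ _
    obtain ⟨e1, he1⟩ := hωe
    have hle : per C.arcs * (C.len / per C.arcs) = C.len := Nat.mul_div_cancel' hg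
    have hlωdvd : l / ω ∣ l := Nat.div_dvd_of_dvd hωl
    have hrot : C.arcs.rotate (l / ω) = C.arcs := by
      have h4 : l / ω = e1 * per C.arcs := by
        have h5 : l = (e1 * per C.arcs) * ω := by
          rw [← hlen, ← hle, he1]; ring
        rw [h5, Nat.mul_div_cancel _ hωpos]
      rw [h4]
      exact rotate_mul C.arcs (per C.arcs) e1 (rotate_per C.arcs)
    have hlen' : C.arcs.length = l := hlen
    have hdec := (rotate_iff_flatten C.arcs (l / ω) hlω (by rw [hlen']; exact hlωdvd)).mp hrot
    rw [hlen', Nat.div_div_self hωl (by omega)] at hdec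
    have hulen : (C.arcs.take (l / ω)).length = l / ω := by
      rw [List.length_take, hlen']
      exact Nat.min_eq_left (Nat.div_le_self l ω)
    have husum : (C.arcs.take (l / ω)).sum = (m / ω) * n := by
      have h6 : C.arcs.sum = ω * (C.arcs.take (l / ω)).sum := by
        conv_lhs => rw [hdec]
        exact sum_flatten_rep _ _
      have h7 : C.arcs.sum = m * n := hsum
      have h8 : ω * (C.arcs.take (l / ω)).sum = ω * ((m / ω) * n) := by
        rw [← h6, h7, ← Nat.mul_assoc, hmmul]
      exact Nat.eq_of_mul_eq_mul_left hωpos h8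
    have hune : C.arcs.take (l / ω) ≠ [] := by
      intro h
      have := congrArg List.length h
      rw [hulen] at this
      simp at this
      have := Nat.le_of_dvd hl hωl
      omega
    have hperu : per (C.arcs.take (l / ω)) = per C.arcs := by
      have hp := per_flatten_rep ω hωpos (C.arcs.take (l / ω)) hune
      rw [← hdec] at hp
      exact hp.symm
    have hmem0 : ∀ a ∈ C.arcs.take (l / ω), a = a1 ∨ a = a1 + d :=
      fun a ha => C.arcs_mem a (List.take_subset _ _ ha)
    have hclosed0 : (((C.arcs.take (l / ω)).sum : ℕ) : ZMod n) = 0 := by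
      rw [husum]; push_cast; simp
    let c0 : Circuit n a1 (a1 + d) := ⟨v, C.arcs.take (l / ω), hune, hmem0, hclosed0⟩
    have hprim : c0.IsPrimitive := by
      apply (isPrimitive_iff hn c0 (m / ω) hmω husum).mpr
      show Nat.gcd ((C.arcs.take (l / ω)).length / per (C.arcs.take (l / ω))) (m / ω) = 1
      rw [hperu, hulen]
      have h4 : l / ω = e1 * per C.arcs := by
        have h5 : l = (e1 * per C.arcs) * ω := by
          rw [← hlen, ← hle, he1]; ring
        rw [h5, Nat.mul_div_cancel _ hωpos]
      rw [h4, Nat.mul_div_cancel _ hgpos]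
      have hco := Nat.coprime_div_gcd_div_gcd
        (show 0 < Nat.gcd (C.len / per C.arcs) m by rw [hf]; exact hωpos)
      rw [hf] at hco
      rw [he1, Nat.mul_div_cancel_left e1 hωpos] at hco
      exact hco
    refine ⟨⟨c0, rfl, hulen, husum, hprim⟩, ?_⟩
    apply Subtype.ext
    exact Circuit.ext' hv.symm hdec.symm
  exact (Nat.card_congr (Equiv.ofBijective Ψ ⟨hinj, hsurj⟩)).symm

end CircAux

/-- For the graph `C_n^+(a1, a1+d)` with `a1, d ≥ 1` and
`n > a1 + d`, for every vertex `v`, every length `l > 0` and every `m ≥ 1`, the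
number of primitive circuits with origin vertex `v`, length `l` and walk sum
`m·n` is `Σ_{ω ∣ gcd(m,l)} μ(ω) · C(l/ω, (mn − a1·l)/(ω·d))`, where binomial
coefficients whose lower argument is not a nonnegative integer are interpreted
as `0`. -/
theorem card_primitive_circuits_fixed_origin
    (n a1 d : ℕ) (ha1 : 0 < a1) (hd : 0 < d) (hn : a1 + d < n)
    (v : ZMod n) (l : ℕ) (hl : 0 < l) (m : ℕ) (hm : 0 < m) :
    (Nat.card {c : Circuit n a1 (a1 + d) //
        c.start = v ∧ c.len = l ∧ c.walkSum = m * n ∧ c.IsPrimitive} : ℤ) =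
      ∑ ω ∈ (Nat.gcd m l).divisors,
        (ArithmeticFunction.moebius ω : ℤ) *
          (if a1 * l ≤ m * n ∧ ω * d ∣ m * n - a1 * l then
            (((l / ω).choose ((m * n - a1 * l) / (ω * d))) : ℤ)
           else 0) := by
  classical
  have hn0 : 0 < n := by omega
  haveI : NeZero n := ⟨hn0.ne'⟩
  have hGpos : 0 < Nat.gcd m l := Nat.gcd_pos_of_pos_left l hm
  have hGm : Nat.gcd m l ∣ m := Nat.gcd_dvd_left m l
  have hGl : Nat.gcd m l ∣ l := Nat.gcd_dvd_right m l
  set G := Nat.gcd m l with hG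
  let Pc : ℕ → ℤ := fun x => (Nat.card {c : Circuit n a1 (a1 + d) //
    c.start = v ∧ c.len = l / x ∧ c.walkSum = (m / x) * n ∧ c.IsPrimitive} : ℤ)
  let Ac : ℕ → ℤ := fun x => (Nat.card {c : Circuit n a1 (a1 + d) //
    c.start = v ∧ c.len = l / x ∧ c.walkSum = (m / x) * n} : ℤ)
  have hdir : ∀ (t : ℕ), t > 0 → t ∈ {x : ℕ | x ∣ G} →
      ∑ i ∈ t.divisors, Pc (G / i) = Ac (G / t) := by
    intro t ht hts
    simp only [Set.mem_setOf_eq] at hts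
    have hspos : 0 < G / t := Nat.div_pos (Nat.le_of_dvd hGpos hts) ht
    set s := G / t with hs
    have hsG : s ∣ G := Nat.div_dvd_of_dvd hts
    have hsm : s ∣ m := hsG.trans hGm
    have hsl : s ∣ l := hsG.trans hGl
    have hst : s * t = G := Nat.div_mul_cancel hts
    have hl' : 0 < l / s := Nat.div_pos (Nat.le_of_dvd hl hsl) hspos
    have hm' : 0 < m / s := Nat.div_pos (Nat.le_of_dvd hm hsm) hspos
    have hgcd' : Nat.gcd (m / s) (l / s) = t := by
      have h1 : s * Nat.gcd (m / s) (l / s) = s * t := by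
        rw [← Nat.gcd_mul_left, Nat.mul_div_cancel' hsm, Nat.mul_div_cancel' hsl, hst]
      exact Nat.eq_of_mul_eq_mul_left hspos h1
    have main := CircAux.card_all_eq_sum n a1 d hd hn0 v (l / s) (m / s) hl' hm'
    rw [hgcd'] at main
    calc ∑ i ∈ t.divisors, Pc (G / i)
        = ∑ i ∈ t.divisors, Pc (s * (t / i)) := by
          apply Finset.sum_congr rfl
          intro i hi
          rw [Nat.mem_divisors] at hi
          congr 1
          rw [← hst, Nat.mul_div_assoc s hi.1]
      _ = ∑ ω ∈ t.divisors, Pc (s * ω) := Nat.sum_div_divisors t (fun ω => Pc (s * ω))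
      _ = Ac s := by
          have h2 : Ac s = ((∑ ω ∈ t.divisors,
              Nat.card {c : Circuit n a1 (a1 + d) // c.start = v ∧ c.len = l / s / ω ∧
                c.walkSum = (m / s / ω) * n ∧ c.IsPrimitive} : ℕ) : ℤ) := by
            simp only [Ac]
            rw [main]
          rw [h2, Nat.cast_sum]
          apply Finset.sum_congr rfl
          intro ω hω
          simp only [Pc]
          rw [Nat.div_div_eq_div_mul, Nat.div_div_eq_div_mul]
  have key := (ArithmeticFunction.sum_eq_iff_sum_smul_moebius_eq_on {x : ℕ | x ∣ G}
    (fun a b hab hb => dvd_trans hab hb)).mp hdir G hGpos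
    (show G ∈ {x : ℕ | x ∣ G} from dvd_refl G)
  rw [Nat.sum_divisorsAntidiagonal
    (fun x y => (ArithmeticFunction.moebius x : ℤ) • Ac (G / y))] at key
  rw [show G / G = 1 from Nat.div_self hGpos] at key
  calc (Nat.card {c : Circuit n a1 (a1 + d) //
      c.start = v ∧ c.len = l ∧ c.walkSum = m * n ∧ c.IsPrimitive} : ℤ)
      = Pc 1 := by simp only [Pc, Nat.div_one]
    _ = ∑ i ∈ G.divisors, (ArithmeticFunction.moebius i : ℤ) • Ac (G / (G / i)) := key.symm
    _ = _ := by
        apply Finset.sum_congr rfl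
        intro ω hω
        rw [Nat.mem_divisors] at hω
        have hωG : ω ∣ G := hω.1
        have hωm : ω ∣ m := hωG.trans hGm
        have hωl : ω ∣ l := hωG.trans hGl
        have hωpos : 0 < ω := Nat.pos_of_dvd_of_pos hωm hm
        have hGG : G / (G / ω) = ω := Nat.div_div_self hωG (by omega)
        have hlω : 0 < l / ω := Nat.div_pos (Nat.le_of_dvd hl hωl) hωpos
        have hSω : (((m / ω * n : ℕ)) : ZMod n) = 0 := by push_cast; simp
        have hAc : Ac ω = if a1 * (l / ω) ≤ m / ω * n ∧ d ∣ m / ω * n - a1 * (l / ω)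
            then (((l / ω).choose ((m / ω * n - a1 * (l / ω)) / d)) : ℤ) else 0 := by
          simp only [Ac]
          rw [CircAux.card_class n a1 d hd v (l / ω) (m / ω * n) hlω hSω]
          push_cast [apply_ite (fun x : ℕ => (x : ℤ))]
          rfl
        have hA : ω * (m / ω * n) = m * n := by
          rw [← Nat.mul_assoc, Nat.mul_div_cancel' hωm]
        have hB : ω * (a1 * (l / ω)) = a1 * l := by
          calc ω * (a1 * (l / ω)) = a1 * (ω * (l / ω)) := by ring
          _ = a1 * l := by rw [Nat.mul_div_cancel' hωl]
        have hsub : m * n - a1 * l = ω * (m / ω * n - a1 * (l / ω)) := by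
          rw [Nat.mul_sub, hA, hB]
        have hle : a1 * (l / ω) ≤ m / ω * n ↔ a1 * l ≤ m * n := by
          constructor
          · intro h
            rw [← hA, ← hB]
            exact Nat.mul_le_mul_left ω h
          · intro h
            apply Nat.le_of_mul_le_mul_left _ hωpos
            rw [hA, hB]
            exact h
        have hdvd : d ∣ m / ω * n - a1 * (l / ω) ↔ ω * d ∣ m * n - a1 * l := by
          rw [hsub]
          exact (mul_dvd_mul_iff_left (show (ω : ℕ) ≠ 0 by omega)).symm
        have hdiv : (m / ω * n - a1 * (l / ω)) / d = (m * n - a1 * l) / (ω * d) := by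
          rw [hsub, Nat.mul_div_mul_left _ _ hωpos]
        rw [hGG, zsmul_eq_mul, hAc]
        congr 1
        by_cases hcase : a1 * l ≤ m * n ∧ ω * d ∣ m * n - a1 * l
        · rw [if_pos ⟨hle.mpr hcase.1, hdvd.mpr hcase.2⟩, if_pos hcase, hdiv]
        · rw [if_neg (fun hc => hcase ⟨hle.mp hc.1, hdvd.mp hc.2⟩), if_neg hcase]
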